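/- arXiv:1207.1993 — 5 statements merged into one kernel-verified Lean document; each statement's English description precedes it below -/
import Mathlib

section
/- The multivariate Gamma function factorizes: for a real number a with a > (m−1)β/2, the integral over the cone of m×m real symmetric positive definite matrices A of exp(−tr A) · (det A)^(a−(m+1)/2) dA equals π^(m(m−1)/4) · ∏_{i=1}^m Γ(a − (i−1)/2). (Real case, β = 1.) -/
open MeasureTheory Real

/-- Index type for the independent entries of a symmetric `m × m` matrix. -/
abbrev SymIdx (m : ℕ) := { p : Fin m × Fin m // p.1 ≤ p.2 }

/-- The symmetric matrix built from its upper-triangular coordinates. -/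
def symOf {m : ℕ} (x : SymIdx m → ℝ) : Matrix (Fin m) (Fin m) ℝ :=
  fun i j => if h : i ≤ j then x ⟨(i, j), h⟩ else x ⟨(j, i), le_of_not_ge h⟩

open Matrix
open scoped ENNReal

lemma symOf_symm {m : ℕ} (x : SymIdx m → ℝ) (i j : Fin m) : symOf x j i = symOf x i j := by
  unfold symOf
  rcases le_or_gt i j with h | h
  · rcases eq_or_lt_of_le h with rfl | h'
    · simp
    · rw [dif_pos h, dif_neg (not_le.mpr h')]
  · rw [dif_pos h.le, dif_neg (not_le.mpr h)]

lemma symOf_isHermitian {m : ℕ} (x : SymIdx m → ℝ) : (symOf x).IsHermitian := by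
  ext i j
  simp [Matrix.conjTranspose_apply, symOf_symm]

lemma symOf_sub {m : ℕ} (x y : SymIdx m → ℝ) : symOf (x - y) = symOf x - symOf y := by
  ext i j
  by_cases h : i ≤ j <;> simp [symOf, h]

/-- The index equivalence splitting off the first row. -/
def e0 (m : ℕ) : SymIdx (m + 1) ≃ (Fin (m + 1)) ⊕ (SymIdx m) where
  toFun p :=
    if h : p.1.1 = 0 then Sum.inl p.1.2
    else Sum.inr ⟨(p.1.1.pred h, p.1.2.pred (fun h2 => h (le_antisymm (h2 ▸ p.2) (Fin.zero_le _)))),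
      by
        rcases p with ⟨⟨i, j⟩, hij⟩
        simpa [Fin.le_def] using Nat.sub_le_sub_right hij 1⟩
  invFun s := Sum.elim (fun j => ⟨(0, j), Fin.zero_le _⟩)
    (fun p => ⟨(p.1.1.succ, p.1.2.succ), Fin.succ_le_succ_iff.mpr p.2⟩) s
  left_inv p := by
    rcases p with ⟨⟨i, j⟩, hij⟩
    by_cases h : i = 0
    · subst h
      have : j = (0 : Fin (m+1)) ⊔ j := by simp [hij]
      simp
    · simp [h]
  right_inv s := by
    rcases s with j | ⟨⟨i, j⟩, hij⟩
    · simp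
    · simp [Fin.succ_ne_zero]

/-- Block matrix with scalar `t` in the corner, `b` in the first row/column, `S` in the rest. -/
def NB {m : ℕ} (t : ℝ) (b : Fin m → ℝ) (S : Matrix (Fin m) (Fin m) ℝ) :
    Matrix (Fin (m + 1)) (Fin (m + 1)) ℝ :=
  Matrix.of fun i j =>
    Fin.cases (Fin.cases t b j) (fun i' => Fin.cases (b i') (fun j' => S i' j') j) i

@[simp] lemma NB_zero_zero {m : ℕ} (t b S) : NB (m := m) t b S 0 0 = t := rfl
@[simp] lemma NB_zero_succ {m : ℕ} (t b S) (j : Fin m) : NB (m := m) t b S 0 j.succ = b j := rfl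
@[simp] lemma NB_succ_zero {m : ℕ} (t b S) (i : Fin m) : NB (m := m) t b S i.succ 0 = b i := rfl
@[simp] lemma NB_succ_succ {m : ℕ} (t b S) (i j : Fin m) :
    NB (m := m) t b S i.succ j.succ = S i j := rfl

def pack' {m : ℕ} (u : Fin (m + 1) → ℝ) (y : SymIdx m → ℝ) : SymIdx (m + 1) → ℝ :=
  fun s => Sum.elim u y (e0 m s)

lemma symOf_pack' {m : ℕ} (u : Fin (m + 1) → ℝ) (y : SymIdx m → ℝ) :
    symOf (pack' u y) = NB (u 0) (fun i => u i.succ) (symOf y) := by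
  ext i j
  unfold symOf pack' e0
  induction i using Fin.cases with
  | zero =>
    induction j using Fin.cases with
    | zero => simp [NB]
    | succ j' => simp [Fin.zero_le, NB]
  | succ i' =>
    induction j using Fin.cases with
    | zero =>
      rw [dif_neg (by simp [Fin.le_def])]
      simp [Fin.succ_ne_zero, NB]
    | succ j' =>
      by_cases h : i' ≤ j'
      · rw [dif_pos (Fin.succ_le_succ_iff.mpr h)]
        simp [Fin.succ_ne_zero, symOf, h, NB]
      · rw [dif_neg (fun hc => h (Fin.succ_le_succ_iff.mp hc))]
        simp [Fin.succ_ne_zero, symOf, h, NB]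


section Schur
variable {n p : Type*} [Fintype p] [DecidableEq p] [Fintype n]

lemma posDef_fromBlocks₁₁ {A : Matrix p p ℝ} (B : Matrix p n ℝ) (D : Matrix n n ℝ)
    (hA : A.PosDef) [Invertible A] :
    (Matrix.fromBlocks A B Bᴴ D).PosDef ↔ (D - Bᴴ * A⁻¹ * B).PosDef := by
  rw [Matrix.posDef_iff_dotProduct_mulVec, Matrix.posDef_iff_dotProduct_mulVec,
    Matrix.IsHermitian.fromBlocks₁₁ _ _ hA.1]
  constructor
  · refine fun h => ⟨h.1, fun x hx => ?_⟩
    have hz : (-((A⁻¹ * B) *ᵥ x) ⊕ᵥ x) ≠ 0 := by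
      intro hc
      apply hx
      ext i
      exact congrFun hc (Sum.inr i)
    have := h.2 hz
    rw [Matrix.dotProduct_mulVec, Matrix.schur_complement_eq₁₁ B D _ _ hA.1, neg_add_cancel,
      dotProduct_zero, zero_add] at this
    rw [Matrix.dotProduct_mulVec]
    exact this
  · refine fun h => ⟨h.1, fun z hz => ?_⟩
    rw [Matrix.dotProduct_mulVec, ← Sum.elim_comp_inl_inr z,
      Matrix.schur_complement_eq₁₁ B D _ _ hA.1]
    by_cases hy : z ∘ Sum.inr = 0
    · have hx : z ∘ Sum.inl ≠ 0 := by
        intro hc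
        apply hz
        ext (i | i)
        · exact congrFun hc i
        · exact congrFun hy i
      have h1 : 0 < (star (z ∘ Sum.inl + (A⁻¹ * B) *ᵥ (z ∘ Sum.inr))) ᵥ* A ⬝ᵥ
          (z ∘ Sum.inl + (A⁻¹ * B) *ᵥ (z ∘ Sum.inr)) := by
        have := hA.dotProduct_mulVec_pos (x := z ∘ Sum.inl + (A⁻¹ * B) *ᵥ (z ∘ Sum.inr)) (by rw [hy]; simpa using hx)
        rwa [Matrix.dotProduct_mulVec] at this
      have h2 : (star (z ∘ Sum.inr)) ᵥ* (D - Bᴴ * A⁻¹ * B) ⬝ᵥ (z ∘ Sum.inr) = 0 := by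
        rw [hy]; simp
      linarith
    · have h1 : 0 ≤ (star (z ∘ Sum.inl + (A⁻¹ * B) *ᵥ (z ∘ Sum.inr))) ᵥ* A ⬝ᵥ
          (z ∘ Sum.inl + (A⁻¹ * B) *ᵥ (z ∘ Sum.inr)) := by
        have := hA.posSemidef.dotProduct_mulVec_nonneg (z ∘ Sum.inl + (A⁻¹ * B) *ᵥ (z ∘ Sum.inr))
        rwa [Matrix.dotProduct_mulVec] at this
      have h2 : 0 < (star (z ∘ Sum.inr)) ᵥ* (D - Bᴴ * A⁻¹ * B) ⬝ᵥ (z ∘ Sum.inr) := by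
        have := h.2 hy
        rwa [Matrix.dotProduct_mulVec] at this
      linarith

lemma posDef_submatrix_of_equiv {l q : Type*} [Fintype l] [DecidableEq l] [Fintype q]
    [DecidableEq q] (N : Matrix l l ℝ) (f : q ≃ l) (hN : N.PosDef) :
    (N.submatrix f f).PosDef := by
    rw [Matrix.posDef_iff_dotProduct_mulVec] at hN ⊢
    refine ⟨hN.1.submatrix _, fun x hx => ?_⟩
    have hx' : x ∘ f.symm ≠ 0 := by
      intro hc; apply hx; ext i; simpa using congrFun hc (f i)
    have := hN.2 hx'
    rw [Matrix.submatrix_mulVec_equiv]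
    calc (star x) ⬝ᵥ ((N *ᵥ (x ∘ f.symm)) ∘ f)
        = star (x ∘ f.symm) ⬝ᵥ (N *ᵥ (x ∘ f.symm)) := by
          simp only [dotProduct]
          exact Fintype.sum_equiv f _ _ (fun i => by simp)
      _ > 0 := this

lemma posDef_submatrix_equiv {M : Matrix n n ℝ} [DecidableEq n] {q : Type*} [Fintype q]
    [DecidableEq q] (e : q ≃ n) : (M.submatrix e e).PosDef ↔ M.PosDef := by
  constructor
  · intro h
    have := posDef_submatrix_of_equiv (M.submatrix e e) e.symm h
    simpa [Matrix.submatrix_submatrix] using this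
  · exact fun h => posDef_submatrix_of_equiv M e h
end Schur


def eqU (m : ℕ) : (Unit ⊕ Fin m) ≃ Fin (m + 1) where
  toFun := Sum.elim (fun _ => 0) Fin.succ
  invFun := fun k => Fin.cases (Sum.inl ()) Sum.inr k
  left_inv s := by rcases s with u | i <;> simp
  right_inv k := by induction k using Fin.cases <;> simp

def Tm (t : ℝ) : Matrix Unit Unit ℝ := Matrix.of fun _ _ => t
def Bm {m : ℕ} (b : Fin m → ℝ) : Matrix Unit (Fin m) ℝ := Matrix.of fun _ j => b j

noncomputable def TmInv (t : ℝ) (ht : t ≠ 0) : Invertible (Tm t) :=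
  ⟨Tm t⁻¹, by ext i j; simp [Tm, Matrix.mul_apply, inv_mul_cancel₀ ht],
    by ext i j; simp [Tm, Matrix.mul_apply, mul_inv_cancel₀ ht]⟩

lemma NB_eq_fromBlocks {m : ℕ} (t : ℝ) (b : Fin m → ℝ) (S : Matrix (Fin m) (Fin m) ℝ) :
    NB t b S = (Matrix.fromBlocks (Tm t) (Bm b) (Bm b)ᴴ S).submatrix (eqU m).symm (eqU m).symm := by
  ext i j
  induction i using Fin.cases with
  | zero =>
    induction j using Fin.cases with
    | zero => simp [NB, eqU, Tm]
    | succ j' => simp [NB, eqU, Bm]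
  | succ i' =>
    induction j using Fin.cases with
    | zero => simp [NB, eqU, Bm, Matrix.conjTranspose_apply]
    | succ j' => simp [NB, eqU]

lemma trace_NB {m : ℕ} (t : ℝ) (b : Fin m → ℝ) (S : Matrix (Fin m) (Fin m) ℝ) :
    (NB t b S).trace = t + S.trace := by
  simp [Matrix.trace, Matrix.diag, Fin.sum_univ_succ, NB]

lemma schurTerm {m : ℕ} (t : ℝ) (ht : t ≠ 0) (b : Fin m → ℝ) :
    (Bm b)ᴴ * (Tm t)⁻¹ * (Bm b) = t⁻¹ • Matrix.vecMulVec b b := by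
  letI := TmInv t ht
  have hinv : (Tm t)⁻¹ = Tm t⁻¹ := by
    rw [← Matrix.invOf_eq_nonsing_inv]
    rfl
  rw [hinv]
  ext i j
  simp [Tm, Bm, Matrix.mul_apply, Matrix.vecMulVec_apply]
  ring

lemma det_NB {m : ℕ} (t : ℝ) (ht : t ≠ 0) (b : Fin m → ℝ) (S : Matrix (Fin m) (Fin m) ℝ) :
    (NB t b S).det = t * (S - t⁻¹ • Matrix.vecMulVec b b).det := by
  letI := TmInv t ht
  rw [NB_eq_fromBlocks, Matrix.det_submatrix_equiv_self, Matrix.det_fromBlocks₁₁]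
  congr 1
  · simp [Matrix.det_unique, Tm]
  · rw [Matrix.invOf_eq_nonsing_inv, schurTerm t ht b]

lemma posDef_Tm {t : ℝ} (ht : 0 < t) : (Tm t).PosDef := by
  rw [Matrix.posDef_iff_dotProduct_mulVec]
  refine ⟨by ext i j; simp [Tm, Matrix.conjTranspose_apply], fun x hx => ?_⟩
  have hx0 : x () ≠ 0 := fun hc => hx (funext fun u => by cases u; simpa using hc)
  have : (star x) ⬝ᵥ ((Tm t) *ᵥ x) = t * (x () * x ()) := by
    simp [Tm, dotProduct, Matrix.mulVec, dotProduct]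
    ring
  rw [this]
  exact mul_pos ht (mul_self_pos.mpr hx0)

lemma posDef_NB_iff {m : ℕ} (t : ℝ) (b : Fin m → ℝ) (S : Matrix (Fin m) (Fin m) ℝ) :
    (NB t b S).PosDef ↔ 0 < t ∧ (S - t⁻¹ • Matrix.vecMulVec b b).PosDef := by
  constructor
  · intro h
    have hne : (Pi.single 0 1 : Fin (m+1) → ℝ) ≠ 0 := by
      intro hc
      have := congrFun hc 0
      simp at this
    have ht : 0 < t := by
      have h2 := h.dotProduct_mulVec_pos hne
      have : (star (Pi.single 0 1 : Fin (m+1) → ℝ)) ⬝ᵥ ((NB t b S) *ᵥ (Pi.single 0 1 : Fin (m+1) → ℝ)) = t := by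
        simp [dotProduct, Matrix.mulVec, Pi.single_apply, mul_ite,
          Finset.sum_ite_eq', NB]
      rwa [this] at h2
    refine ⟨ht, ?_⟩
    letI := TmInv t ht.ne'
    rw [← schurTerm t ht.ne' b, ← posDef_fromBlocks₁₁ (Bm b) S (posDef_Tm ht)]
    rw [NB_eq_fromBlocks] at h
    exact (posDef_submatrix_equiv _).mp h
  · rintro ⟨ht, hS⟩
    letI := TmInv t ht.ne'
    rw [NB_eq_fromBlocks]
    rw [posDef_submatrix_equiv]
    rw [posDef_fromBlocks₁₁ (Bm b) S (posDef_Tm ht), schurTerm t ht.ne' b]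
    exact hS
noncomputable def wVec {m : ℕ} (t : ℝ) (b : Fin m → ℝ) : SymIdx m → ℝ := fun s => t⁻¹ * (b s.1.1 * b s.1.2)

lemma symOf_wVec {m : ℕ} (t : ℝ) (b : Fin m → ℝ) :
    symOf (wVec t b) = t⁻¹ • Matrix.vecMulVec b b := by
  ext i j
  by_cases h : i ≤ j
  · simp [symOf, wVec, Matrix.vecMulVec_apply, h]
  · simp [symOf, wVec, Matrix.vecMulVec_apply, h, mul_comm]

lemma trace_smul_vecMulVec {m : ℕ} (c : ℝ) (b : Fin m → ℝ) :
    (c • Matrix.vecMulVec b b).trace = c * ∑ i, b i ^ 2 := by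
  simp [Matrix.trace, Matrix.diag, Matrix.vecMulVec_apply, Finset.mul_sum, sq]

lemma continuous_symOf {m : ℕ} : Continuous fun (x : SymIdx m → ℝ) => symOf x := by
  apply continuous_pi; intro i; apply continuous_pi; intro j
  by_cases h : i ≤ j
  · simpa [symOf, h] using continuous_apply (⟨(i, j), h⟩ : SymIdx m)
  · simpa [symOf, h] using continuous_apply (⟨(j, i), le_of_not_ge h⟩ : SymIdx m)

lemma measurable_det_symOf {m : ℕ} : Measurable fun (x : SymIdx m → ℝ) => (symOf x).det :=
  (continuous_symOf.matrix_det).measurable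

lemma measurable_trace_symOf {m : ℕ} : Measurable fun (x : SymIdx m → ℝ) => (symOf x).trace :=
  (continuous_symOf.matrix_trace).measurable

lemma measurable_integrand {m : ℕ} (c : ℝ) :
    Measurable fun (x : SymIdx m → ℝ) =>
      ENNReal.ofReal (Real.exp (-(symOf x).trace) * (symOf x).det ^ c) := by
  have h1 := measurable_det_symOf (m := m)
  have h2 := measurable_trace_symOf (m := m)
  fun_prop

noncomputable def EQm (m : ℕ) : ((Fin (m+1) → ℝ) × (SymIdx m → ℝ)) ≃ᵐ (SymIdx (m+1) → ℝ) :=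
  (MeasurableEquiv.sumPiEquivProdPi (fun _ : Fin (m+1) ⊕ SymIdx m => ℝ)).symm.trans
    (MeasurableEquiv.piCongrLeft (fun _ : SymIdx (m+1) => ℝ) (e0 m).symm)

lemma EQm_apply {m : ℕ} (u : Fin (m+1) → ℝ) (y : SymIdx m → ℝ) :
    EQm m (u, y) = pack' u y := by
  funext s
  show (MeasurableEquiv.piCongrLeft (fun _ : SymIdx (m+1) => ℝ) (e0 m).symm)
    ((MeasurableEquiv.sumPiEquivProdPi (fun _ : Fin (m+1) ⊕ SymIdx m => ℝ)).symm (u, y)) s = _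
  rw [MeasurableEquiv.coe_piCongrLeft]
  have h1 : ∀ z : (Fin (m+1) ⊕ SymIdx m) → ℝ,
      (Equiv.piCongrLeft (fun _ : SymIdx (m+1) => ℝ) (e0 m).symm) z s = z (e0 m s) := by
    intro z
    have := Equiv.piCongrLeft_apply_apply (fun _ : SymIdx (m+1) => ℝ) (e0 m).symm z (e0 m s)
    simpa using this
  rw [h1, MeasurableEquiv.coe_sumPiEquivProdPi_symm, Equiv.sumPiEquivProdPi_symm_apply]
  unfold pack'
  rcases e0 m s with j | p <;> rfl

lemma mp_EQm (m : ℕ) : MeasureTheory.MeasurePreserving (EQm m) volume volume := by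
  have h := (volume_measurePreserving_piCongrLeft (fun _ : SymIdx (m+1) => ℝ) (e0 m).symm).comp
    (volume_measurePreserving_sumPiEquivProdPi_symm (fun _ : Fin (m+1) ⊕ SymIdx m => ℝ))
  simpa [EQm, MeasurableEquiv.coe_trans] using h

lemma piFinSuccAbove_symm_zero {m : ℕ} (w : ℝ × (Fin m → ℝ)) :
    (MeasurableEquiv.piFinSuccAbove (fun _ : Fin (m+1) => ℝ) 0).symm w = Fin.cons w.1 w.2 := by
  funext j
  show (Fin.insertNthEquiv (fun _ : Fin (m+1) => ℝ) 0) w j = _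
  rw [Fin.insertNthEquiv_apply]
  induction j using Fin.cases with
  | zero => rw [Fin.insertNth_apply_same]; rfl
  | succ j' =>
    have hs : (0 : Fin (m+1)).succAbove j' = j'.succ := by simp
    rw [← hs, Fin.insertNth_apply_succAbove, hs, Fin.cons_succ]

lemma measurable_cons {m : ℕ} : Measurable fun w : ℝ × (Fin m → ℝ) => (Fin.cons w.1 w.2 : Fin (m+1) → ℝ) := by
  rw [measurable_pi_iff]
  intro j
  induction j using Fin.cases with
  | zero => simpa using measurable_fst
  | succ j' => simp only [Fin.cons_succ]; exact (measurable_pi_apply j').comp measurable_snd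

lemma lintegral_step {m : ℕ} (F : (SymIdx (m+1) → ℝ) → ℝ≥0∞) (hF : Measurable F) :
    ∫⁻ x, F x = ∫⁻ t : ℝ, ∫⁻ b : Fin m → ℝ, ∫⁻ y : SymIdx m → ℝ, F (pack' (Fin.cons t b) y) := by
  rw [MeasureTheory.MeasurePreserving.lintegral_map_equiv F (EQm m) (mp_EQm m)]
  have hmeas : Measurable fun q : (Fin (m+1) → ℝ) × (SymIdx m → ℝ) => F (EQm m q) :=
    hF.comp (EQm m).measurable
  rw [MeasureTheory.Measure.volume_eq_prod, MeasureTheory.lintegral_prod _ hmeas.aemeasurable]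
  have hmeas2 : Measurable fun q : (Fin (m+1) → ℝ) × (SymIdx m → ℝ) => F (pack' q.1 q.2) := by
    have : (fun q : (Fin (m+1) → ℝ) × (SymIdx m → ℝ) => F (pack' q.1 q.2))
        = fun q => F (EQm m q) := by
      funext q; rw [EQm_apply]
    rw [this]; exact hmeas
  have hstep1 : (fun u : Fin (m+1) → ℝ => ∫⁻ y, F (EQm m (u, y)))
      = fun u => ∫⁻ y, F (pack' u y) := by
    funext u
    congr 1
    funext y
    rw [EQm_apply]
  rw [hstep1]
  have hK : Measurable fun u : Fin (m+1) → ℝ => ∫⁻ y, F (pack' u y) :=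
    Measurable.lintegral_prod_right (f := fun u y => F (pack' u y)) hmeas2
  rw [MeasureTheory.MeasurePreserving.lintegral_map_equiv _
    (MeasurableEquiv.piFinSuccAbove (fun _ : Fin (m+1) => ℝ) 0).symm
    ((MeasureTheory.volume_preserving_piFinSuccAbove (fun _ : Fin (m+1) => ℝ) 0).symm _)]
  have hstep2 : (fun w : ℝ × (Fin m → ℝ) =>
      ∫⁻ y, F (pack' ((MeasurableEquiv.piFinSuccAbove (fun _ : Fin (m+1) => ℝ) 0).symm w) y))
      = fun w => ∫⁻ y, F (pack' (Fin.cons w.1 w.2) y) := by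
    funext w; rw [piFinSuccAbove_symm_zero]
  rw [hstep2, MeasureTheory.Measure.volume_eq_prod]
  exact MeasureTheory.lintegral_prod _ ((hK.comp measurable_cons).aemeasurable)

lemma posDef_fin_zero (M : Matrix (Fin 0) (Fin 0) ℝ) : M.PosDef :=
  ⟨by ext i j; exact i.elim0, fun v hv =>
    absurd (Finsupp.ext fun i : Fin 0 => i.elim0) hv⟩

lemma measurableSet_posDef : ∀ m : ℕ, MeasurableSet {x : SymIdx m → ℝ | (symOf x).PosDef} := by
  intro m
  induction m with
  | zero =>
    have : {x : SymIdx 0 → ℝ | (symOf x).PosDef} = Set.univ :=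
      Set.eq_univ_of_forall fun x => posDef_fin_zero _
    rw [this]; exact MeasurableSet.univ
  | succ m ih =>
    rw [← (EQm m).measurableSet_preimage]
    have hset : (EQm m) ⁻¹' {x : SymIdx (m+1) → ℝ | (symOf x).PosDef}
        = {q : (Fin (m+1) → ℝ) × (SymIdx m → ℝ) | 0 < q.1 0}
          ∩ ((fun q : (Fin (m+1) → ℝ) × (SymIdx m → ℝ) =>
              q.2 - wVec (q.1 0) (fun i => q.1 i.succ)) ⁻¹' {y | (symOf y).PosDef}) := by
      ext ⟨u, y⟩
      simp only [Set.mem_preimage, Set.mem_setOf_eq, Set.mem_inter_iff]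
      rw [EQm_apply, symOf_pack', posDef_NB_iff]
      rw [show (symOf y - (u 0)⁻¹ • Matrix.vecMulVec (fun i => u i.succ) (fun i => u i.succ))
          = symOf (y - wVec (u 0) (fun i => u i.succ)) by rw [symOf_sub, symOf_wVec]]
    rw [hset]
    refine MeasurableSet.inter ?_ ?_
    · exact measurableSet_lt measurable_const (by fun_prop)
    · have hmap : Measurable fun q : (Fin (m+1) → ℝ) × (SymIdx m → ℝ) =>
          q.2 - wVec (q.1 0) (fun i => q.1 i.succ) := by
        rw [measurable_pi_iff]
        intro s
        simp only [Pi.sub_apply, wVec]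
        fun_prop
      exact hmap ih

noncomputable def symInt (m : ℕ) (c : ℝ) : (SymIdx m → ℝ) → ℝ≥0∞ :=
  fun x => Set.indicator {x : SymIdx m → ℝ | (symOf x).PosDef}
    (fun x => ENNReal.ofReal (Real.exp (-(symOf x).trace) * (symOf x).det ^ (c - ((m : ℝ) + 1)/2))) x

noncomputable def Phi (m : ℕ) (c : ℝ) : ℝ≥0∞ := ∫⁻ x : SymIdx m → ℝ, symInt m c x

lemma measurable_symInt (m : ℕ) (c : ℝ) : Measurable (symInt m c) :=
  (measurable_integrand _).indicator (measurableSet_posDef m)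

lemma lintegral_sub_vec {m : ℕ} (g : (SymIdx m → ℝ) → ℝ≥0∞) (v : SymIdx m → ℝ) :
    ∫⁻ y : SymIdx m → ℝ, g (y - v) = ∫⁻ y : SymIdx m → ℝ, g y := by
  simp_rw [sub_eq_add_neg]
  exact MeasureTheory.lintegral_add_right_eq_self g (-v)

lemma lintegral_gauss {m : ℕ} {cg : ℝ} (hc : 0 < cg) :
    ∫⁻ b : Fin m → ℝ, ENNReal.ofReal (Real.exp (-(cg * ∑ i, b i ^ 2)))
      = ENNReal.ofReal ((π / cg) ^ ((m : ℝ)/2)) := by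
  have hfun : ∀ b : Fin m → ℝ,
      Real.exp (-(cg * ∑ i, b i ^ 2)) = ∏ i, Real.exp (-(cg * b i ^ 2)) := by
    intro b
    rw [← Real.exp_sum]
    congr 1
    rw [Finset.mul_sum, ← Finset.sum_neg_distrib]
  simp_rw [hfun]
  have hint : MeasureTheory.Integrable (fun b : Fin m → ℝ => ∏ i, Real.exp (-(cg * b i ^ 2))) := by
    apply MeasureTheory.Integrable.fin_nat_prod (f := fun (_ : Fin m) (x : ℝ) => Real.exp (-(cg * x ^ 2)))
    intro i
    simpa [neg_mul] using integrable_exp_neg_mul_sq hc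
  rw [← MeasureTheory.ofReal_integral_eq_lintegral_ofReal hint
    (Filter.Eventually.of_forall fun b => Finset.prod_nonneg fun i _ => (Real.exp_pos _).le)]
  congr 1
  rw [MeasureTheory.integral_fin_nat_prod_volume_eq_prod
    (f := fun (_ : Fin m) (x : ℝ) => Real.exp (-(cg * x ^ 2)))]
  have h1 : ∫ x : ℝ, Real.exp (-(cg * x ^ 2)) = Real.sqrt (π / cg) := by
    simpa [neg_mul] using integral_gaussian cg
  rw [h1, Finset.prod_const, Finset.card_univ, Fintype.card_fin,
    Real.sqrt_eq_rpow, ← Real.rpow_natCast ((π / cg) ^ ((1:ℝ)/2)) m,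
    ← Real.rpow_mul (div_nonneg pi_pos.le hc.le)]
  norm_num
  congr 1
  ring

lemma lintegral_gammaInt {s : ℝ} (hs : 0 < s) :
    ∫⁻ t : ℝ, (if 0 < t then ENNReal.ofReal (Real.exp (-t) * t ^ (s - 1)) else 0)
      = ENNReal.ofReal (Real.Gamma s) := by
  have h0 : (fun t : ℝ => if 0 < t then ENNReal.ofReal (Real.exp (-t) * t ^ (s - 1)) else 0)
      = (Set.Ioi (0:ℝ)).indicator (fun t => ENNReal.ofReal (Real.exp (-t) * t ^ (s - 1))) := by
    funext t
    rw [Set.indicator_apply]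
    simp [Set.mem_Ioi]
  rw [h0, MeasureTheory.lintegral_indicator measurableSet_Ioi]
  rw [← MeasureTheory.ofReal_integral_eq_lintegral_ofReal (Real.GammaIntegral_convergent hs)
    ((MeasureTheory.ae_restrict_iff' measurableSet_Ioi).mpr (Filter.Eventually.of_forall
      fun x hx => mul_nonneg (Real.exp_pos _).le (Real.rpow_nonneg (le_of_lt hx) _)))]
  rw [Real.Gamma_eq_integral hs]

lemma symInt_pack {m : ℕ} (c t : ℝ) (b : Fin m → ℝ) (y : SymIdx m → ℝ) :
    symInt (m+1) c (pack' (Fin.cons t b) y) =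
      (if 0 < t then ENNReal.ofReal (Real.exp (-t) * t ^ (c - ((m:ℝ) + 2)/2) *
        Real.exp (-(t⁻¹ * ∑ i, b i ^ 2))) else 0) *
      symInt m (c - 1/2) (y - wVec t b) := by
  classical
  have hNB : symOf (pack' (Fin.cons t b) y) = NB t b (symOf y) := by
    rw [symOf_pack']
    simp
  have hSchur : (symOf y - t⁻¹ • Matrix.vecMulVec b b) = symOf (y - wVec t b) := by
    rw [symOf_sub, symOf_wVec]
  simp only [symInt]
  rw [Set.indicator_apply, Set.indicator_apply]
  simp only [Set.mem_setOf_eq, hNB, posDef_NB_iff, hSchur]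
  by_cases ht : 0 < t
  · by_cases hP : (symOf (y - wVec t b)).PosDef
    · rw [if_pos ⟨ht, hP⟩, if_pos hP, if_pos ht]
      rw [trace_NB, det_NB t ht.ne', hSchur]
      have htr : (symOf y).trace = (symOf (y - wVec t b)).trace + t⁻¹ * ∑ i, b i ^ 2 := by
        have h1 : symOf y = symOf (y - wVec t b) + symOf (wVec t b) := by
          rw [symOf_sub]
          abel
        rw [h1, Matrix.trace_add, symOf_wVec, trace_smul_vecMulVec]
      rw [htr]
      rw [← ENNReal.ofReal_mul (by positivity)]
      congr 1
      have hd : 0 < (symOf (y - wVec t b)).det := hP.det_pos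
      have e1 : c - (((m+1 : ℕ) : ℝ) + 1)/2 = c - ((m:ℝ) + 2)/2 := by push_cast; ring
      have e2 : c - 1/2 - ((m:ℝ) + 1)/2 = c - ((m:ℝ) + 2)/2 := by ring
      rw [e1, e2, Real.mul_rpow ht.le hd.le]
      rw [show -(t + ((symOf (y - wVec t b)).trace + t⁻¹ * ∑ i, b i ^ 2))
          = (-t) + (-(t⁻¹ * ∑ i, b i ^ 2)) + (-(symOf (y - wVec t b)).trace) by ring,
        Real.exp_add, Real.exp_add]
      ring
    · rw [if_neg (fun hc' => hP hc'.2), if_neg hP, mul_zero]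
  · rw [if_neg (fun hc' => ht hc'.1), if_neg ht, zero_mul]

lemma Phi_eq : ∀ m : ℕ, ∀ a : ℝ, ((m : ℝ) - 1)/2 < a →
    Phi m a = ENNReal.ofReal (π ^ ((m * (m - 1) : ℝ)/4) *
      ∏ i : Fin m, Real.Gamma (a - (i : ℝ)/2)) := by
  intro m
  induction m with
  | zero =>
    intro a _
    have h1 : ∀ x : SymIdx 0 → ℝ, symInt 0 a x = 1 := by
      intro x
      have hP : x ∈ {x : SymIdx 0 → ℝ | (symOf x).PosDef} := posDef_fin_zero _
      rw [symInt, Set.indicator_of_mem hP]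
      simp [Matrix.trace, Matrix.det_isEmpty, Real.one_rpow]
    haveI : IsEmpty (SymIdx 0) := ⟨fun p => p.1.1.elim0⟩
    rw [Phi]
    simp_rw [h1]
    rw [MeasureTheory.lintegral_one, MeasureTheory.volume_pi, MeasureTheory.Measure.pi_univ]
    simp
  | succ m ih =>
    intro a ha
    have ham : (m : ℝ)/2 < a := by push_cast at ha; linarith
    have ha0 : 0 < a := lt_of_le_of_lt (by positivity) ham
    have ha' : ((m : ℝ) - 1)/2 < a - 1/2 := by linarith
    rw [Phi, lintegral_step _ (measurable_symInt (m+1) a)]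
    simp_rw [symInt_pack a]
    have hy : ∀ t : ℝ, ∀ b : Fin m → ℝ,
        (∫⁻ y : SymIdx m → ℝ,
          (if 0 < t then ENNReal.ofReal (Real.exp (-t) * t ^ (a - ((m:ℝ) + 2)/2) *
            Real.exp (-(t⁻¹ * ∑ i, b i ^ 2))) else 0) * symInt m (a - 1/2) (y - wVec t b))
        = (if 0 < t then ENNReal.ofReal (Real.exp (-t) * t ^ (a - ((m:ℝ) + 2)/2) *
            Real.exp (-(t⁻¹ * ∑ i, b i ^ 2))) else 0) * Phi m (a - 1/2) := by
      intro t b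
      rw [MeasureTheory.lintegral_const_mul' _ _
        (by split_ifs; exacts [ENNReal.ofReal_ne_top, ENNReal.zero_ne_top])]
      rw [lintegral_sub_vec (symInt m (a - 1/2)) (wVec t b)]
      rfl
    simp_rw [hy, ih (a - 1/2) ha']
    set R : ℝ≥0∞ := ENNReal.ofReal (π ^ ((m * (m - 1) : ℝ)/4) *
      ∏ i : Fin m, Real.Gamma (a - 1/2 - (i : ℝ)/2)) with hR
    have hb : ∀ t : ℝ,
        (∫⁻ b : Fin m → ℝ,
          (if 0 < t then ENNReal.ofReal (Real.exp (-t) * t ^ (a - ((m:ℝ) + 2)/2) *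
            Real.exp (-(t⁻¹ * ∑ i, b i ^ 2))) else 0) * R)
        = (if 0 < t then ENNReal.ofReal (Real.exp (-t) * t ^ (a - 1)) else 0) *
            (ENNReal.ofReal (π ^ ((m:ℝ)/2)) * R) := by
      intro t
      rw [MeasureTheory.lintegral_mul_const' R _ ENNReal.ofReal_ne_top]
      by_cases ht : 0 < t
      · simp only [if_pos ht]
        have hsplit : ∀ b : Fin m → ℝ,
            ENNReal.ofReal (Real.exp (-t) * t ^ (a - ((m:ℝ) + 2)/2) *
              Real.exp (-(t⁻¹ * ∑ i, b i ^ 2)))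
            = ENNReal.ofReal (Real.exp (-t) * t ^ (a - ((m:ℝ) + 2)/2)) *
              ENNReal.ofReal (Real.exp (-(t⁻¹ * ∑ i, b i ^ 2))) := fun b =>
          ENNReal.ofReal_mul (by positivity)
        simp_rw [hsplit]
        rw [MeasureTheory.lintegral_const_mul' _ _ ENNReal.ofReal_ne_top,
          lintegral_gauss (inv_pos.mpr ht)]
        rw [← mul_assoc]
        refine congrArg (· * R) ?_
        rw [← ENNReal.ofReal_mul (by positivity), ← ENNReal.ofReal_mul (by positivity)]
        congr 1
        have hπt : π / t⁻¹ = π * t := by field_simp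
        have h2 : t ^ (a - ((m:ℝ) + 2)/2) * t ^ ((m:ℝ)/2) = t ^ (a - 1) := by
          rw [← Real.rpow_add ht]
          congr 1
          ring
        calc Real.exp (-t) * t ^ (a - ((m:ℝ) + 2)/2) * (π / t⁻¹) ^ ((m:ℝ)/2)
            = Real.exp (-t) * (t ^ (a - ((m:ℝ) + 2)/2) * t ^ ((m:ℝ)/2)) * π ^ ((m:ℝ)/2) := by
              rw [hπt, Real.mul_rpow pi_pos.le ht.le]; ring
          _ = Real.exp (-t) * t ^ (a - 1) * π ^ ((m:ℝ)/2) := by rw [h2]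
      · simp [ht]
    simp_rw [hb]
    rw [MeasureTheory.lintegral_mul_const' _ _
      (ENNReal.mul_ne_top ENNReal.ofReal_ne_top ENNReal.ofReal_ne_top),
      lintegral_gammaInt ha0]
    rw [← ENNReal.ofReal_mul (by positivity),
      ← ENNReal.ofReal_mul (le_of_lt (Real.Gamma_pos_of_pos ha0))]
    congr 1
    rw [Fin.prod_univ_succ]
    have hπ : π ^ ((m:ℝ)/2) * π ^ ((m * (m - 1) : ℝ)/4)
        = π ^ (((m+1 : ℕ) * ((m+1 : ℕ) - 1) : ℝ)/4) := by
      rw [← Real.rpow_add pi_pos]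
      congr 1
      push_cast
      ring
    have hΓ : ∏ i : Fin m, Real.Gamma (a - 1/2 - (i : ℝ)/2)
        = ∏ i : Fin m, Real.Gamma (a - ((i.succ : Fin (m+1)) : ℝ)/2) := by
      refine Finset.prod_congr rfl fun i _ => ?_
      congr 1
      simp [Fin.val_succ]
      push_cast
      ring
    rw [hΓ, ← hπ]
    simp only [Fin.val_zero, Nat.cast_zero, zero_div, sub_zero]
    ring

theorem stmt_2 (m : ℕ) (a : ℝ) (ha : (m - 1 : ℝ) / 2 < a) :
    ∫ x : SymIdx m → ℝ in {x | (symOf x).PosDef},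
        Real.exp (-(symOf x).trace) * (symOf x).det ^ (a - (m + 1 : ℝ) / 2)
    = Real.pi ^ ((m * (m - 1) : ℝ) / 4) *
        ∏ i : Fin m, Real.Gamma (a - (i : ℝ) / 2) := by
  have hmeasSet := measurableSet_posDef m
  have hfmeas : Measurable fun x : SymIdx m → ℝ =>
      Real.exp (-(symOf x).trace) * (symOf x).det ^ (a - (m + 1 : ℝ) / 2) := by
    have h1 := measurable_det_symOf (m := m)
    have h2 := measurable_trace_symOf (m := m)
    fun_prop
  have hnn : 0 ≤ᵐ[volume.restrict {x : SymIdx m → ℝ | (symOf x).PosDef}]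
      fun x : SymIdx m → ℝ =>
        Real.exp (-(symOf x).trace) * (symOf x).det ^ (a - (m + 1 : ℝ) / 2) :=
    (MeasureTheory.ae_restrict_iff' hmeasSet).mpr (Filter.Eventually.of_forall
      fun x hx => mul_nonneg (Real.exp_pos _).le
        (Real.rpow_nonneg (le_of_lt (Matrix.PosDef.det_pos hx)) _))
  rw [MeasureTheory.integral_eq_lintegral_of_nonneg_ae hnn hfmeas.aestronglyMeasurable]
  rw [show (∫⁻ x : SymIdx m → ℝ in {x : SymIdx m → ℝ | (symOf x).PosDef},
      ENNReal.ofReal (Real.exp (-(symOf x).trace) * (symOf x).det ^ (a - (m + 1 : ℝ) / 2)))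
      = Phi m a from by
    rw [Phi, ← MeasureTheory.lintegral_indicator hmeasSet]
    rfl]
  rw [Phi_eq m a ha]
  rw [ENNReal.toReal_ofReal]
  refine mul_nonneg (Real.rpow_nonneg pi_pos.le _) (Finset.prod_nonneg fun i _ => ?_)
  refine le_of_lt (Real.Gamma_pos_of_pos ?_)
  have hi : ((i : ℕ) : ℝ) + 1 ≤ (m : ℝ) := by exact_mod_cast i.isLt
  linarith
end

section
/- Change of variables for congruence transformation (real nonsingular case): the linear map S ↦ Bᵀ S B on the space of m×m real symmetric matrices, for fixed invertible B, has determinant of absolute value |det B|^(m+1); hence the Jacobian of X = Bᵀ Y B is |det B|^(m+1). -/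
open Matrix

variable {m : ℕ}

/-- coercion-level membership -/
lemma mem_sa_iff (M : Matrix (Fin m) (Fin m) ℝ) :
    M ∈ selfAdjoint (Matrix (Fin m) (Fin m) ℝ) ↔ Mᵀ = M := by
  rw [selfAdjoint.mem_iff]
  have : star M = Mᵀ := by
    ext i j; simp [Matrix.star_eq_conjTranspose, Matrix.conjTranspose_apply]
  rw [this]

noncomputable def symEquiv (m : ℕ) : selfAdjoint (Matrix (Fin m) (Fin m) ℝ) ≃ₗ[ℝ]
    ({p : Fin m × Fin m // p.1 ≤ p.2} → ℝ) where
  toFun S p := (S : Matrix (Fin m) (Fin m) ℝ) p.1.1 p.1.2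
  map_add' S T := by ext p; rfl
  map_smul' c S := by ext p; rfl
  invFun f := ⟨fun i j => if h : i ≤ j then f ⟨(i, j), h⟩ else f ⟨(j, i), le_of_not_ge h⟩, by
    refine (mem_sa_iff _).2 ?_
    ext i j
    change (if h : j ≤ i then _ else _) = _
    rcases le_or_gt i j with h | h
    · rcases eq_or_lt_of_le h with rfl | h'
      · simp
      · rw [dif_neg (not_le.2 h'), dif_pos h]
    · rw [dif_pos h.le, dif_neg (not_le.2 h)]⟩
  left_inv S := by
    apply Subtype.ext
    ext i j
    rcases le_or_gt i j with h | h
    · simp [dif_pos h]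
    · simp only [dif_neg (not_le.2 h)]
      conv_rhs => rw [← (mem_sa_iff _).1 S.2]
      rfl
  right_inv f := by
    ext p
    simp only [dif_pos p.2]


noncomputable def cng (m : ℕ) (B : Matrix (Fin m) (Fin m) ℝ) :
    Module.End ℝ (selfAdjoint (Matrix (Fin m) (Fin m) ℝ)) where
  toFun S := ⟨Bᵀ * (S : Matrix (Fin m) (Fin m) ℝ) * B, by
    rw [mem_sa_iff]
    have hS : (S : Matrix (Fin m) (Fin m) ℝ)ᵀ = S := (mem_sa_iff _).1 S.2
    rw [Matrix.transpose_mul, Matrix.transpose_mul, Matrix.transpose_transpose, hS,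
      Matrix.mul_assoc]⟩
  map_add' S T := by
    apply Subtype.ext
    simp [Matrix.mul_add, Matrix.add_mul]
  map_smul' c S := by
    apply Subtype.ext
    simp [Matrix.mul_smul, Matrix.smul_mul]

@[simp] lemma cng_coe (B : Matrix (Fin m) (Fin m) ℝ)
    (S : selfAdjoint (Matrix (Fin m) (Fin m) ℝ)) :
    ((cng m B S : selfAdjoint (Matrix (Fin m) (Fin m) ℝ)) : Matrix (Fin m) (Fin m) ℝ)
      = Bᵀ * (S : Matrix (Fin m) (Fin m) ℝ) * B := rfl

lemma cng_mul (A B : Matrix (Fin m) (Fin m) ℝ) :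
    cng m (A * B) = cng m B * cng m A := by
  apply LinearMap.ext
  intro S
  apply Subtype.ext
  show ((A * B)ᵀ) * (S : Matrix (Fin m) (Fin m) ℝ) * (A * B)
      = Bᵀ * (Aᵀ * (S : Matrix (Fin m) (Fin m) ℝ) * A) * B
  rw [Matrix.transpose_mul]
  noncomm_ring

lemma cng_one : cng m 1 = 1 := by
  apply LinearMap.ext
  intro S
  apply Subtype.ext
  show (1 : Matrix (Fin m) (Fin m) ℝ)ᵀ * (S : Matrix (Fin m) (Fin m) ℝ) * 1 = _
  simp

open Polynomial in
lemma mdet_one_add_nilpotent {n : Type*} [Fintype n] [DecidableEq n]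
    (A : Matrix n n ℝ) (hA : IsNilpotent A) : (1 + A).det = 1 := by
  have hch : A.charpoly = X ^ (Fintype.card n) := by
    have h := Matrix.isNilpotent_charpoly_sub_pow_of_isNilpotent hA
    exact sub_eq_zero.1 h.eq_zero
  have h1 := congrArg (Polynomial.eval (-1 : ℝ)) hch
  rw [Matrix.charpoly, _root_.eval_det, eval_pow, eval_X] at h1
  have h2 : (Polynomial.eval (Matrix.scalar n (-1 : ℝ)) (matPolyEquiv (Matrix.charmatrix A)))
      = -(1 + A) := by
    rw [matPolyEquiv_charmatrix, Polynomial.eval_sub, Polynomial.eval_X, Polynomial.eval_C]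
    rw [neg_add]
    congr 1
    · ext i j; simp [Matrix.scalar_apply, Matrix.diagonal, Matrix.one_apply]
      split <;> simp
  rw [h2, Matrix.det_neg] at h1
  have : ((-1 : ℝ) ^ Fintype.card n) * (1 + A).det = (-1) ^ Fintype.card n := h1
  have hne : ((-1 : ℝ) ^ Fintype.card n) ≠ 0 := by positivity
  exact mul_left_cancel₀ hne (by rw [this, mul_one])

lemma ldet_one_add_nilpotent {ι : Type*} [Fintype ι] [DecidableEq ι]
    {V : Type*} [AddCommGroup V] [Module ℝ V] (b : Module.Basis ι ℝ V)
    {f : Module.End ℝ V} (hf : IsNilpotent f) : LinearMap.det (1 + f) = 1 := by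
  rw [← LinearMap.det_toMatrix b]
  have h1 : LinearMap.toMatrix b b (1 + f) = 1 + LinearMap.toMatrix b b f := by
    rw [map_add, LinearMap.toMatrix_one]
  rw [h1]
  apply mdet_one_add_nilpotent
  obtain ⟨k, hk⟩ := hf
  have hp : ∀ k, LinearMap.toMatrix b b (f ^ k) = (LinearMap.toMatrix b b f) ^ k := by
    intro k
    induction k with
    | zero => simp [LinearMap.toMatrix_one]
    | succ n ih => rw [pow_succ, pow_succ, ← ih, ← LinearMap.toMatrix_mul]
  exact ⟨k, by rw [← hp, hk, map_zero]⟩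

noncomputable def saBasis (m : ℕ) :
    Module.Basis {p : Fin m × Fin m // p.1 ≤ p.2} ℝ (selfAdjoint (Matrix (Fin m) (Fin m) ℝ)) :=
  Module.Basis.ofEquivFun (symEquiv m)

lemma det_cng_transvection (i j : Fin m) (hij : i ≠ j) (c : ℝ) :
    LinearMap.det (cng m (Matrix.transvection i j c)) = 1 := by
  set E : Matrix (Fin m) (Fin m) ℝ := Matrix.single i j c with hE
  set ℓ : Module.End ℝ (Matrix (Fin m) (Fin m) ℝ) := LinearMap.mulLeft ℝ Eᵀ with hl
  set r : Module.End ℝ (Matrix (Fin m) (Fin m) ℝ) := LinearMap.mulRight ℝ E with hr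
  have hE2 : E * E = 0 := by
    rw [hE]
    rw [Matrix.single_mul_single_of_ne]
    exact hij.symm
  have hℓ : IsNilpotent ℓ := ⟨2, by
    rw [sq, hl, Module.End.mul_eq_comp, ← LinearMap.mulLeft_mul, ← Matrix.transpose_mul, hE2]
    simp⟩
  have hrn : IsNilpotent r := ⟨2, by
    rw [sq, hr, Module.End.mul_eq_comp, ← LinearMap.mulRight_mul, hE2]
    simp⟩
  have hcomm : Commute ℓ r := LinearMap.commute_mulLeft_right _ _
  have hM : IsNilpotent (ℓ + r + ℓ * r) := by
    have c1 : Commute ℓ (ℓ * r) := (Commute.refl ℓ).mul_right hcomm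
    have c2 : Commute r (ℓ * r) := hcomm.symm.mul_right (Commute.refl r)
    exact (c1.add_left c2).isNilpotent_add (hcomm.isNilpotent_add hℓ hrn)
      (hcomm.isNilpotent_mul_right hℓ)
  -- the congruence map is 1 + N with N a restriction of ℓ + r + ℓ*r
  set N : Module.End ℝ (selfAdjoint (Matrix (Fin m) (Fin m) ℝ)) :=
    cng m (Matrix.transvection i j c) - 1 with hN
  have hNcoe : ∀ S : selfAdjoint (Matrix (Fin m) (Fin m) ℝ),
      ((N S : selfAdjoint (Matrix (Fin m) (Fin m) ℝ)) : Matrix (Fin m) (Fin m) ℝ)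
        = (ℓ + r + ℓ * r) (S : Matrix (Fin m) (Fin m) ℝ) := by
    intro S
    have : ((N S : selfAdjoint (Matrix (Fin m) (Fin m) ℝ)) : Matrix (Fin m) (Fin m) ℝ)
        = (Matrix.transvection i j c)ᵀ * (S : Matrix (Fin m) (Fin m) ℝ)
            * Matrix.transvection i j c - S := rfl
    rw [this]
    simp only [LinearMap.add_apply, Module.End.mul_apply, hl, hr, LinearMap.mulLeft_apply,
      LinearMap.mulRight_apply, Matrix.transvection, Matrix.transpose_add, Matrix.transpose_one]
    noncomm_ring
  have hNnil : IsNilpotent N := by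
    obtain ⟨k, hk⟩ := hM
    refine ⟨k, ?_⟩
    have key : ∀ (k : ℕ) (S : selfAdjoint (Matrix (Fin m) (Fin m) ℝ)),
        (((N ^ k) S : selfAdjoint (Matrix (Fin m) (Fin m) ℝ)) : Matrix (Fin m) (Fin m) ℝ)
          = ((ℓ + r + ℓ * r) ^ k) (S : Matrix (Fin m) (Fin m) ℝ) := by
      intro k
      induction k with
      | zero => intro S; rfl
      | succ n ih =>
        intro S
        rw [pow_succ', pow_succ', Module.End.mul_apply, Module.End.mul_apply, hNcoe, ih]
    apply LinearMap.ext
    intro S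
    apply Subtype.ext
    rw [key, hk]
    rfl
  have : cng m (Matrix.transvection i j c) = 1 + N := by rw [hN]; abel
  rw [this]
  exact ldet_one_add_nilpotent (saBasis m) hNnil

lemma det_cng_diagonal (D : Fin m → ℝ) :
    LinearMap.det (cng m (Matrix.diagonal D)) = (∏ i, D i) ^ (m + 1) := by
  have hmat : LinearMap.toMatrix (saBasis m) (saBasis m) (cng m (Matrix.diagonal D))
      = Matrix.diagonal (fun p : {p : Fin m × Fin m // p.1 ≤ p.2} => D p.1.1 * D p.1.2) := by
    ext p q
    rw [LinearMap.toMatrix_apply]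
    have h1 : (saBasis m).repr (cng m (Matrix.diagonal D) (saBasis m q)) p
        = ((cng m (Matrix.diagonal D) (saBasis m q) : selfAdjoint (Matrix (Fin m) (Fin m) ℝ))
            : Matrix (Fin m) (Fin m) ℝ) p.1.1 p.1.2 := rfl
    rw [h1, cng_coe, Matrix.diagonal_transpose, Matrix.mul_diagonal, Matrix.diagonal_mul]
    have h2 : ((saBasis m q : selfAdjoint (Matrix (Fin m) (Fin m) ℝ))
        : Matrix (Fin m) (Fin m) ℝ) p.1.1 p.1.2 = symEquiv m (saBasis m q) p := rfl
    rw [h2]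
    have h3 : symEquiv m (saBasis m q) = Pi.single q (1 : ℝ) := by
      have h4 : saBasis m q = (symEquiv m).symm (Pi.single q 1) := by
        rw [saBasis, Module.Basis.coe_ofEquivFun]
      rw [h4, (symEquiv m).apply_symm_apply]
    rw [h3]
    rcases eq_or_ne p q with rfl | hpq
    · simp [Matrix.diagonal_apply_eq]
    · rw [Matrix.diagonal_apply_ne _ hpq, Pi.single_eq_of_ne hpq]
      ring
  rw [← LinearMap.det_toMatrix (saBasis m), hmat, Matrix.det_diagonal]
  rw [← Finset.prod_subtype (Finset.univ.filter fun p : Fin m × Fin m => p.1 <= p.2)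
    (fun p => by simp) (fun p : Fin m × Fin m => D p.1 * D p.2)]
  rw [Finset.prod_filter, ← Finset.univ_product_univ, Finset.prod_product]
  have step : ∀ i j : Fin m, (if i <= j then D i * D j else 1)
      = (if i <= j then D i else 1) * (if i <= j then D j else 1) := by
    intro i j; split_ifs <;> simp
  simp_rw [step]
  rw [Finset.prod_congr rfl (fun i _ => Finset.prod_mul_distrib), Finset.prod_mul_distrib]
  have hIci : ∀ i : Fin m, (Finset.univ.filter fun j => i <= j) = Finset.Ici i := by
    intro i; ext j; simp
  have hIic : ∀ j : Fin m, (Finset.univ.filter fun i => i <= j) = Finset.Iic j := by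
    intro j; ext i; simp
  have first : ∀ i : Fin m, (∏ j, if i <= j then D i else 1) = D i ^ (m - (i : ℕ)) := by
    intro i
    rw [Finset.prod_ite, Finset.prod_const, Finset.prod_const_one, mul_one, hIci, Fin.card_Ici]
  have second : (∏ i : Fin m, ∏ j : Fin m, if i <= j then D j else 1)
      = ∏ j : Fin m, D j ^ ((j : ℕ) + 1) := by
    rw [Finset.prod_comm]
    refine Finset.prod_congr rfl fun j _ => ?_
    rw [Finset.prod_ite, Finset.prod_const, Finset.prod_const_one, mul_one, hIic, Fin.card_Iic]
  simp_rw [first]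
  rw [second, ← Finset.prod_mul_distrib, ← Finset.prod_pow]
  refine Finset.prod_congr rfl fun i _ => ?_
  rw [← pow_add]
  congr 1
  have := i.isLt
  omega

lemma det_cng_list (L : List (Matrix.TransvectionStruct (Fin m) ℝ)) :
    LinearMap.det (cng m (L.map Matrix.TransvectionStruct.toMatrix).prod) = 1 := by
  induction L with
  | nil => simp [cng_one]
  | cons t L ih =>
    rw [List.map_cons, List.prod_cons, cng_mul, Module.End.mul_eq_comp, LinearMap.det_comp, ih, one_mul]
    exact det_cng_transvection t.i t.j t.hij t.c

theorem stmt_7 (m : ℕ) (B : Matrix (Fin m) (Fin m) ℝ) (hB : B.det ≠ 0)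
    (T : selfAdjoint (Matrix (Fin m) (Fin m) ℝ) →ₗ[ℝ]
         selfAdjoint (Matrix (Fin m) (Fin m) ℝ))
    (hT : ∀ S : selfAdjoint (Matrix (Fin m) (Fin m) ℝ),
      (T S : Matrix (Fin m) (Fin m) ℝ) = Bᵀ * (S : Matrix (Fin m) (Fin m) ℝ) * B) :
    |LinearMap.det T| = |B.det| ^ (m + 1) := by
  have hTc : T = cng m B := by
    apply LinearMap.ext
    intro S
    apply Subtype.ext
    rw [hT]
    rfl
  obtain ⟨L, L', D, hM⟩ := Matrix.Pivot.exists_list_transvec_mul_diagonal_mul_list_transvec B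
  have hdetB : B.det = ∏ i, D i := by
    rw [hM]
    rw [Matrix.det_mul, Matrix.det_mul]
    have key : ∀ L'' : List (Matrix.TransvectionStruct (Fin m) ℝ),
        ((L''.map Matrix.TransvectionStruct.toMatrix).prod).det = 1 := by
      intro L''
      have := (Matrix.detMonoidHom :
        Matrix (Fin m) (Fin m) ℝ →* ℝ).map_list_prod (L''.map Matrix.TransvectionStruct.toMatrix)
      rw [show (Matrix.detMonoidHom : Matrix (Fin m) (Fin m) ℝ →* ℝ)
        (L''.map Matrix.TransvectionStruct.toMatrix).prod
          = ((L''.map Matrix.TransvectionStruct.toMatrix).prod).det from rfl] at this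
      rw [this]
      apply List.prod_eq_one
      intro x hx
      simp only [List.map_map, List.mem_map, Function.comp] at hx
      obtain ⟨t, _, rfl⟩ := hx
      exact Matrix.TransvectionStruct.det t
    rw [key, key, Matrix.det_diagonal, one_mul, mul_one]
  have hdetT : LinearMap.det T = (∏ i, D i) ^ (m + 1) := by
    rw [hTc, hM, cng_mul, cng_mul, Module.End.mul_eq_comp, LinearMap.det_comp,
      Module.End.mul_eq_comp, LinearMap.det_comp, det_cng_list, det_cng_list,
      det_cng_diagonal]
    ring
  rw [hdetT, hdetB, abs_pow]
end

section
/- Change of variables for complex congruence transformation: for fixed invertible complex m×m matrix B, the real-linear map S ↦ B* S B on the real vector space of m×m complex Hermitian matrices has determinant of absolute value |det B|^(2m). -/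
open Matrix

noncomputable section

namespace Aux8

variable {K : Type*} [Field K]

lemma det_prodMap {M N : Type*} [AddCommGroup M] [Module K M] [AddCommGroup N] [Module K N]
    [FiniteDimensional K M] [FiniteDimensional K N] (f : M →ₗ[K] M) (g : N →ₗ[K] N) :
    LinearMap.det (f.prodMap g) = LinearMap.det f * LinearMap.det g := by
  classical
  let b := Module.finBasis K M
  let c := Module.finBasis K N
  rw [← LinearMap.det_toMatrix (b.prod c), ← LinearMap.det_toMatrix b,
    ← LinearMap.det_toMatrix c, LinearMap.toMatrix_prodMap, Matrix.det_fromBlocks_zero₂₁]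

def piMap {M : Type*} [AddCommGroup M] [Module K M] (n : ℕ) (f : Fin n → (M →ₗ[K] M)) :
    (Fin n → M) →ₗ[K] (Fin n → M) :=
  LinearMap.pi fun i => (f i).comp (LinearMap.proj i)

@[simp] lemma piMap_apply {M : Type*} [AddCommGroup M] [Module K M] (n : ℕ)
    (f : Fin n → (M →ₗ[K] M)) (v : Fin n → M) (i : Fin n) :
    piMap n f v i = f i (v i) := rfl

def piSuccEquiv {M : Type*} [AddCommGroup M] [Module K M] (n : ℕ) :
    (Fin (n+1) → M) ≃ₗ[K] M × (Fin n → M) where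
  toFun v := (v 0, fun i => v i.succ)
  invFun p := Fin.cons p.1 p.2
  map_add' _ _ := rfl
  map_smul' _ _ := rfl
  left_inv v := funext (Fin.cases rfl (fun i => by simp))
  right_inv p := by ext x <;> simp

lemma det_piMap {M : Type*} [AddCommGroup M] [Module K M] [FiniteDimensional K M]
    (n : ℕ) (f : Fin n → (M →ₗ[K] M)) :
    LinearMap.det (piMap n f) = ∏ i, LinearMap.det (f i) := by
  induction n with
  | zero =>
      haveI : Subsingleton (Fin 0 → M) := ⟨fun a b => funext fun i => i.elim0⟩
      simp [LinearMap.det_eq_one_of_subsingleton]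
  | succ n ih =>
      have h : ((piSuccEquiv (M := M) (K := K) n : (Fin (n+1) → M) →ₗ[K] M × (Fin n → M)) ∘ₗ
            piMap (n+1) f) ∘ₗ ((piSuccEquiv (M := M) (K := K) n).symm :
              M × (Fin n → M) →ₗ[K] (Fin (n+1) → M))
          = (f 0).prodMap (piMap n (fun i => f i.succ)) := by
        apply LinearMap.ext; intro p
        ext
        · simp [piSuccEquiv]
        · simp [piSuccEquiv]
      have := LinearMap.det_conj (piMap (n+1) f) (piSuccEquiv (M := M) (K := K) n)
      rw [← this]
      rw [show (piSuccEquiv (M := M) (K := K) n : (Fin (n+1) → M) →ₗ[K] M × (Fin n → M)) ∘ₗ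
            piMap (n+1) f ∘ₗ ((piSuccEquiv (M := M) (K := K) n).symm :
              M × (Fin n → M) →ₗ[K] (Fin (n+1) → M)) = ((piSuccEquiv (M := M) (K := K) n :
              (Fin (n+1) → M) →ₗ[K] M × (Fin n → M)) ∘ₗ piMap (n+1) f) ∘ₗ
              ((piSuccEquiv (M := M) (K := K) n).symm :
              M × (Fin n → M) →ₗ[K] (Fin (n+1) → M)) from rfl, h, det_prodMap, ih,
        Fin.prod_univ_succ]


lemma diag_conj_transvection {k : ℕ} {i j : Fin k} (hij : i ≠ j) (c : ℂ) :
    diagonal (Function.update (fun _ => (1:ℂ)) i 2) * transvection i j c *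
      diagonal (Function.update (fun _ => (1:ℂ)) i 2⁻¹) = transvection i j (2 * c) := by
  ext a b
  simp only [transvection, Matrix.add_mul, Matrix.mul_add, Matrix.mul_one, Matrix.one_mul,
    diagonal_mul_diagonal, Matrix.add_apply]
  rw [mul_diagonal, diagonal_mul]
  congr 1
  · by_cases hab : a = b
    · subst hab
      rw [diagonal_apply_eq, Matrix.one_apply_eq]
      by_cases ha : a = i <;> simp [Function.update, ha]
    · rw [diagonal_apply_ne _ hab, Matrix.one_apply_ne hab]
  · show _ * Matrix.single i j c a b * _ = Matrix.single i j (2*c) a b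
    unfold Matrix.single
    by_cases hai : i = a
    · subst hai
      by_cases hbj : j = b
      · subst hbj
        simp [Function.update, hij, (Ne.symm hij : j ≠ i)]
      · simp [hbj]
    · simp [hai]


abbrev dR {k : ℕ} (A : Matrix (Fin k) (Fin k) ℂ) : ℝ :=
  LinearMap.det ((A.mulVecLin).restrictScalars ℝ)

lemma dR_mul {k : ℕ} (A C : Matrix (Fin k) (Fin k) ℂ) : dR (A * C) = dR A * dR C := by
  unfold dR
  rw [Matrix.mulVecLin_mul]
  rw [show ((A.mulVecLin).comp (C.mulVecLin)).restrictScalars ℝ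
      = ((A.mulVecLin).restrictScalars ℝ).comp ((C.mulVecLin).restrictScalars ℝ) from rfl]
  exact LinearMap.det_comp _ _

lemma dR_one {k : ℕ} : dR (1 : Matrix (Fin k) (Fin k) ℂ) = 1 := by
  unfold dR
  rw [Matrix.mulVecLin_one]
  rw [show (LinearMap.id : (Fin k → ℂ) →ₗ[ℂ] (Fin k → ℂ)).restrictScalars ℝ = LinearMap.id from rfl]
  exact LinearMap.det_id

lemma dR_diagonal {k : ℕ} (D : Fin k → ℂ) :
    dR (diagonal D) = ∏ i, Complex.normSq (D i) := by
  unfold dR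
  have h : ((diagonal D).mulVecLin).restrictScalars ℝ
      = piMap k (fun i => (Algebra.lmul ℝ ℂ (D i) : ℂ →ₗ[ℝ] ℂ)) := by
    apply LinearMap.ext; intro x
    funext i
    simp [piMap, mulVec_diagonal]
  rw [h, det_piMap]
  congr 1
  funext i
  rw [← Algebra.norm_apply ℝ (D i), Algebra.norm_complex_apply]

lemma dR_transvection {k : ℕ} {i j : Fin k} (hij : i ≠ j) (c : ℂ) :
    dR (transvection i j c) = 1 := by
  have hadd : ∀ c d : ℂ, dR (transvection i j (c + d))
      = dR (transvection i j c) * dR (transvection i j d) := by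
    intro c d
    rw [← transvection_mul_transvection_same i j hij, dR_mul]
  have hne : dR (transvection i j c) ≠ 0 := by
    intro h0
    have h1 : dR (transvection i j c) * dR (transvection i j (-c)) = 1 := by
      rw [← dR_mul, transvection_mul_transvection_same i j hij, add_neg_cancel,
        transvection_zero, dR_one]
    rw [h0, zero_mul] at h1; exact zero_ne_one h1
  have hDD : diagonal (Function.update (fun _ => (1:ℂ)) i 2) *
      diagonal (Function.update (fun _ => (1:ℂ)) i 2⁻¹) = 1 := by
    rw [diagonal_mul_diagonal]
    have hfun : (fun a => Function.update (fun _ => (1:ℂ)) i 2 a *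
        Function.update (fun _ => (1:ℂ)) i 2⁻¹ a) = fun _ => (1:ℂ) := by
      funext a
      by_cases ha : a = i <;> simp [Function.update, ha]
    rw [hfun, diagonal_one]
  have hconj : dR (transvection i j (2 * c)) = dR (transvection i j c) := by
    rw [← diag_conj_transvection hij c, dR_mul, dR_mul]
    have : dR (diagonal (Function.update (fun _ => (1:ℂ)) i 2)) *
        dR (diagonal (Function.update (fun _ => (1:ℂ)) i 2⁻¹)) = 1 := by
      rw [← dR_mul, hDD, dR_one]
    calc dR (diagonal (Function.update (fun _ => (1:ℂ)) i 2)) * dR (transvection i j c) *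
          dR (diagonal (Function.update (fun _ => (1:ℂ)) i 2⁻¹))
        = dR (diagonal (Function.update (fun _ => (1:ℂ)) i 2)) *
          dR (diagonal (Function.update (fun _ => (1:ℂ)) i 2⁻¹)) * dR (transvection i j c) := by
          ring
      _ = dR (transvection i j c) := by rw [this, one_mul]
  have hsq : dR (transvection i j c) * dR (transvection i j c) = dR (transvection i j c) := by
    rw [← hadd c c, ← two_mul, hconj]
  exact mul_left_cancel₀ hne (by rw [hsq, mul_one])

lemma dR_eq {k : ℕ} (A : Matrix (Fin k) (Fin k) ℂ) : dR A = Complex.normSq A.det := by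
  apply diagonal_transvection_induction (fun M => dR M = Complex.normSq M.det) A
  · intro D _
    rw [dR_diagonal, det_diagonal, map_prod Complex.normSq]
  · rintro ⟨i, j, hij, c⟩
    rw [TransvectionStruct.toMatrix_mk, dR_transvection hij, det_transvection_of_ne i j hij, _root_.map_one]
  · intro M N hM hN
    rw [dR_mul, det_mul, _root_.map_mul, hM, hN]


lemma dR_eq' {k : ℕ} (A : Matrix (Fin k) (Fin k) ℂ) :
    LinearMap.det ((A.mulVecLin).restrictScalars ℝ) = Complex.normSq A.det := dR_eq A

variable {m : ℕ}

lemma det_mulRight (A : Matrix (Fin m) (Fin m) ℂ) :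
    LinearMap.det (LinearMap.mulRight ℝ A :
      Matrix (Fin m) (Fin m) ℂ →ₗ[ℝ] Matrix (Fin m) (Fin m) ℂ)
      = Complex.normSq A.det ^ m := by
  have h : (LinearMap.mulRight ℝ A :
      Matrix (Fin m) (Fin m) ℂ →ₗ[ℝ] Matrix (Fin m) (Fin m) ℂ)
      = piMap m (fun _ => ((Aᵀ.mulVecLin).restrictScalars ℝ)) := by
    apply LinearMap.ext; intro X
    funext i j
    show (X * A) i j = (Aᵀ *ᵥ (X i)) j
    simp [Matrix.mul_apply, Matrix.mulVec, dotProduct, mul_comm]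
  rw [h]
  refine (det_piMap m _).trans ?_
  rw [dR_eq', Matrix.det_transpose, Finset.prod_const, Finset.card_univ, Fintype.card_fin]

lemma det_mulLeft (A : Matrix (Fin m) (Fin m) ℂ) :
    LinearMap.det (LinearMap.mulLeft ℝ A :
      Matrix (Fin m) (Fin m) ℂ →ₗ[ℝ] Matrix (Fin m) (Fin m) ℂ)
      = Complex.normSq A.det ^ m := by
  have h : ((Matrix.transposeLinearEquiv (Fin m) (Fin m) ℝ ℂ) : _ →ₗ[ℝ] _) ∘ₗ
      (LinearMap.mulLeft ℝ A) ∘ₗ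
      ((Matrix.transposeLinearEquiv (Fin m) (Fin m) ℝ ℂ).symm : _ →ₗ[ℝ] _)
      = LinearMap.mulRight ℝ Aᵀ := by
    apply LinearMap.ext; intro X
    simp only [LinearMap.comp_apply, LinearEquiv.coe_coe, Matrix.transposeLinearEquiv_symm,
      Matrix.transposeLinearEquiv_apply, LinearMap.mulLeft_apply, LinearMap.mulRight_apply,
      Matrix.transpose_mul, Matrix.transpose_transpose]
    show (A * Xᵀ)ᵀ = X * Aᵀ
    rw [Matrix.transpose_mul, Matrix.transpose_transpose]
  have h2 := LinearMap.det_conj (LinearMap.mulLeft ℝ A)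
    (Matrix.transposeLinearEquiv (Fin m) (Fin m) ℝ ℂ)
  rw [h] at h2
  rw [← h2, det_mulRight, Matrix.det_transpose]


abbrev MM (m : ℕ) := Matrix (Fin m) (Fin m) ℂ

/-- inclusion of selfAdjoint matrices -/
def inclSA : selfAdjoint (MM m) →ₗ[ℝ] MM m where
  toFun := Subtype.val
  map_add' _ _ := rfl
  map_smul' _ _ := rfl

def inclSK : skewAdjoint (MM m) →ₗ[ℝ] MM m where
  toFun := Subtype.val
  map_add' _ _ := rfl
  map_smul' _ _ := rfl

instance : FiniteDimensional ℝ (selfAdjoint (MM m)) :=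
  FiniteDimensional.of_injective inclSA Subtype.coe_injective

instance : FiniteDimensional ℝ (skewAdjoint (MM m)) :=
  FiniteDimensional.of_injective inclSK Subtype.coe_injective

/-- multiplication by I as an equiv from skewAdjoint to selfAdjoint -/
def Jeq : skewAdjoint (MM m) ≃ₗ[ℝ] selfAdjoint (MM m) where
  toFun S := ⟨Complex.I • (S : MM m), by
    rw [selfAdjoint.mem_iff, star_smul, (skewAdjoint.mem_iff.mp S.2 : star (S : MM m) = -_)]
    simp [Complex.star_def, Complex.conj_I]⟩
  invFun S := ⟨(-Complex.I) • (S : MM m), by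
    rw [skewAdjoint.mem_iff, star_smul, (selfAdjoint.mem_iff.mp S.2 : star (S : MM m) = _)]
    simp [Complex.star_def, Complex.conj_I]⟩
  map_add' S₁ S₂ := by ext; simp [smul_add, mul_add]
  map_smul' r S := by
    ext
    simp only [skewAdjoint.val_smul, selfAdjoint.val_smul, RingHom.id_apply]
    rw [smul_comm]
  left_inv S := by ext; simp [smul_smul, ← mul_assoc, Complex.I_mul_I]
  right_inv S := by ext; simp [smul_smul, ← mul_assoc, Complex.I_mul_I]

variable (B : MM m)

/-- congruence map on skew-adjoint matrices -/
def Tsk : skewAdjoint (MM m) →ₗ[ℝ] skewAdjoint (MM m) where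
  toFun S := ⟨Bᴴ * (S : MM m) * B, by
    rw [skewAdjoint.mem_iff, Matrix.star_eq_conjTranspose, conjTranspose_mul, conjTranspose_mul,
      conjTranspose_conjTranspose,
      show (S : MM m)ᴴ = star (S : MM m) from rfl,
      (skewAdjoint.mem_iff.mp S.2 : star (S : MM m) = -_)]
    noncomm_ring⟩
  map_add' S₁ S₂ := by ext; simp [Matrix.mul_add, Matrix.add_mul]
  map_smul' r S := by
    ext
    simp [skewAdjoint.val_smul, Matrix.mul_smul, Matrix.smul_mul]


end Aux8

end

open Aux8 in
theorem stmt_8 (m : ℕ) (B : Matrix (Fin m) (Fin m) ℂ) (hB : B.det ≠ 0)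
    (T : selfAdjoint (Matrix (Fin m) (Fin m) ℂ) →ₗ[ℝ]
         selfAdjoint (Matrix (Fin m) (Fin m) ℂ))
    (hT : ∀ S : selfAdjoint (Matrix (Fin m) (Fin m) ℂ),
      (T S : Matrix (Fin m) (Fin m) ℂ) = Bᴴ * (S : Matrix (Fin m) (Fin m) ℂ) * B) :
    |LinearMap.det T| = ‖B.det‖ ^ (2 * m) := by
  classical
  set Φ : MM m →ₗ[ℝ] MM m := (LinearMap.mulRight ℝ B).comp (LinearMap.mulLeft ℝ Bᴴ) with hΦ
  have hΦapp : ∀ X : MM m, Φ X = Bᴴ * X * B := fun X => rfl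
  have hstar : ∀ X : MM m, star (Bᴴ * X * B) = Bᴴ * star X * B := by
    intro X
    simp [Matrix.star_eq_conjTranspose, conjTranspose_mul, Matrix.mul_assoc]
  -- determinant of Φ
  have hdetΦ : LinearMap.det Φ = Complex.normSq B.det ^ (2 * m) := by
    rw [hΦ, LinearMap.det_comp, det_mulRight, det_mulLeft, Matrix.det_conjTranspose,
      show Complex.normSq (star B.det) = Complex.normSq B.det from Complex.normSq_conj _,
      ← pow_add, two_mul]
  -- conjugating Φ by the decomposition gives T.prodMap Tsk
  set e := StarModule.decomposeProdAdjoint ℝ (MM m) with he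
  have hcomp : (e : MM m →ₗ[ℝ] _) ∘ₗ Φ = ((T.prodMap (Tsk B)) ∘ₗ (e : MM m →ₗ[ℝ] _)) := by
    apply LinearMap.ext; intro X
    have h1 : e X = (selfAdjointPart ℝ X, skewAdjointPart ℝ X) := rfl
    have h2 : e (Φ X) = (selfAdjointPart ℝ (Φ X), skewAdjointPart ℝ (Φ X)) := rfl
    simp only [LinearMap.comp_apply, LinearEquiv.coe_coe, h1, h2, LinearMap.prodMap_apply,
      Prod.map_apply]
    refine Prod.ext (Subtype.ext ?_) (Subtype.ext ?_)
    · rw [hT]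
      simp only [selfAdjointPart_apply_coe, hΦapp, hstar]
      simp [Matrix.mul_add, Matrix.add_mul, Matrix.mul_smul, Matrix.smul_mul]
    · show (skewAdjointPart ℝ (Φ X) : MM m) = Bᴴ * (skewAdjointPart ℝ X : MM m) * B
      simp only [skewAdjointPart_apply_coe, hΦapp, hstar]
      simp [Matrix.mul_sub, Matrix.sub_mul, Matrix.mul_smul, Matrix.smul_mul]
  have hdet2 : LinearMap.det Φ = LinearMap.det T * LinearMap.det (Tsk B) := by
    have h3 := LinearMap.det_conj Φ e
    have h4 : (e : MM m →ₗ[ℝ] _) ∘ₗ Φ ∘ₗ (e.symm : _ →ₗ[ℝ] MM m)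
        = T.prodMap (Tsk B) := by
      rw [← LinearMap.comp_assoc, hcomp, LinearMap.comp_assoc, LinearEquiv.comp_coe,
        LinearEquiv.symm_trans_self, LinearEquiv.refl_toLinearMap, LinearMap.comp_id]
    rw [← h3, h4, det_prodMap]
  -- det (Tsk B) = det T
  have hTsk : LinearMap.det (Tsk B) = LinearMap.det T := by
    have h5 := LinearMap.det_conj (Tsk B) (Jeq (m := m))
    have h6 : ((Jeq (m := m)) : skewAdjoint (MM m) →ₗ[ℝ] selfAdjoint (MM m)) ∘ₗ (Tsk B) ∘ₗ
        ((Jeq (m := m)).symm : selfAdjoint (MM m) →ₗ[ℝ] skewAdjoint (MM m)) = T := by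
      apply LinearMap.ext; intro S
      apply Subtype.ext
      rw [hT]
      show Complex.I • (Bᴴ * ((-Complex.I) • (S : MM m)) * B) = Bᴴ * (S : MM m) * B
      rw [Matrix.mul_smul, Matrix.smul_mul, smul_smul]
      norm_num
    rw [← h5, h6]
  have hsq : LinearMap.det T * LinearMap.det T = Complex.normSq B.det ^ (2 * m) := by
    rw [← hdetΦ, hdet2, hTsk]
  -- conclude
  have hb : (Complex.normSq B.det : ℝ) ^ (2 * m) = (‖B.det‖ ^ (2 * m)) ^ 2 := by
    rw [Complex.normSq_eq_norm_sq, ← pow_mul, ← pow_mul]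
    ring_nf
  have habs : |LinearMap.det T| = ‖B.det‖ ^ (2 * m) := by
    have h7 : (LinearMap.det T) ^ 2 = (‖B.det‖ ^ (2 * m)) ^ 2 := by
      rw [sq, hsq, hb]
    have h8 : |LinearMap.det T| = |‖B.det‖ ^ (2 * m)| :=
      abs_eq_abs.mpr (sq_eq_sq_iff_eq_or_eq_neg.mp h7)
    rw [h8, abs_of_nonneg (by positivity)]
  exact habs
end

section
/- Right multiplication Jacobian, complex case: for a fixed invertible m×m complex matrix B, the real-linear map Z ↦ Z B from n×m complex matrices to themselves has real determinant of absolute value |det B|^(2n). -/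
open Matrix

lemma aux_toMatrix_restrictScalars {ι E : Type*} [Fintype ι] [DecidableEq ι]
    [AddCommGroup E] [Module ℂ E] (c : Module.Basis ι ℂ E) (f : E →ₗ[ℂ] E) (p q : Fin 2 × ι) :
    LinearMap.toMatrix (Complex.basisOneI.smulTower c) (Complex.basisOneI.smulTower c)
      (f.restrictScalars ℝ) p q
      = Algebra.leftMulMatrix Complex.basisOneI ((LinearMap.toMatrix c c f) p.2 q.2) p.1 q.1 := by
  obtain ⟨i, k⟩ := p; obtain ⟨j, l⟩ := q
  rw [LinearMap.toMatrix_apply, Algebra.leftMulMatrix_eq_repr_mul, LinearMap.toMatrix_apply,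
    Module.Basis.smulTower_apply, Module.Basis.smulTower_repr]
  simp only [LinearMap.restrictScalars_apply, LinearMap.map_smul, LinearEquiv.map_smul,
    Finsupp.smul_apply, smul_eq_mul]
  rw [mul_comm]

lemma aux_det_fromBlocks {ι : Type*} [Fintype ι] [DecidableEq ι] (X Y : Matrix ι ι ℂ) :
    (fromBlocks X (-Y) Y X).det = (X - Complex.I • Y).det * (X + Complex.I • Y).det := by
  set P : Matrix (ι ⊕ ι) (ι ⊕ ι) ℂ :=
    fromBlocks 1 1 (Complex.I • 1) (-(Complex.I • 1)) with hP
  set D : Matrix (ι ⊕ ι) (ι ⊕ ι) ℂ :=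
    fromBlocks (X - Complex.I • Y) 0 0 (X + Complex.I • Y) with hD
  have e11 : X * 1 + (-Y) * (Complex.I • 1)
      = 1 * (X - Complex.I • Y) + 1 * 0 := by
    simp [Matrix.mul_smul]; module
  have e12 : X * 1 + (-Y) * (-(Complex.I • 1))
      = 1 * 0 + 1 * (X + Complex.I • Y) := by
    simp [Matrix.mul_smul]
  have e21 : Y * 1 + X * (Complex.I • 1)
      = (Complex.I • 1) * (X - Complex.I • Y) + (-(Complex.I • 1)) * 0 := by
    simp [Matrix.mul_smul, Matrix.smul_mul, smul_smul, Complex.I_mul_I, smul_sub]; module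
  have e22 : Y * 1 + X * (-(Complex.I • 1))
      = (Complex.I • 1) * 0 + (-(Complex.I • 1)) * (X + Complex.I • Y) := by
    simp [Matrix.mul_smul, Matrix.smul_mul, smul_smul, Complex.I_mul_I, smul_add]
  have hPD : (fromBlocks X (-Y) Y X) * P = P * D := by
    rw [hP, hD, fromBlocks_multiply, fromBlocks_multiply, e11, e12, e21, e22]
  have hdetP : P.det ≠ 0 := by
    rw [hP, det_fromBlocks_one₁₁]
    have : (-(Complex.I • 1) - Complex.I • 1 * 1 : Matrix ι ι ℂ) = (-(2 * Complex.I)) • 1 := by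
      rw [mul_one]; module
    rw [this, det_smul, det_one, mul_one]
    apply pow_ne_zero
    simp [Complex.ext_iff]
  have hdet := congrArg Matrix.det hPD
  rw [det_mul, det_mul] at hdet
  have h2 : (fromBlocks X (-Y) Y X).det * P.det = D.det * P.det := by
    rw [hdet, mul_comm]
  rw [mul_right_cancel₀ hdetP h2, hD, det_fromBlocks_zero₂₁]

def auxEquiv (ι : Type*) : ι ⊕ ι ≃ Fin 2 × ι where
  toFun := Sum.elim (fun k => (0, k)) (fun k => (1, k))
  invFun p := if p.1 = 0 then .inl p.2 else .inr p.2
  left_inv x := by cases x <;> simp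
  right_inv p := by
    obtain ⟨i, k⟩ := p
    fin_cases i <;> simp

lemma aux_det_real_block {ι : Type*} [Fintype ι] [DecidableEq ι] (A : Matrix ι ι ℂ)
    (M : Matrix (Fin 2 × ι) (Fin 2 × ι) ℝ)
    (hM : ∀ p q, M p q = Algebra.leftMulMatrix Complex.basisOneI (A p.2 q.2) p.1 q.1) :
    M.det = Complex.normSq A.det := by
  set Mc := (algebraMap ℝ ℂ).mapMatrix M with hMc
  have hmap : Mc.det = (M.det : ℂ) := by
    rw [hMc, ← RingHom.map_det]; rfl
  have hsub : Mc.submatrix (auxEquiv ι) (auxEquiv ι)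
      = fromBlocks (A.map fun z => (z.re : ℂ)) (-(A.map fun z => (z.im : ℂ)))
          (A.map fun z => (z.im : ℂ)) (A.map fun z => (z.re : ℂ)) := by
    ext p q
    cases p <;> cases q <;>
      simp [auxEquiv, hMc, hM, Algebra.leftMulMatrix_complex, fromBlocks]
  have hdetMc : Mc.det = (A.map fun z => ((starRingEnd ℂ) z)).det * A.det := by
    rw [← det_submatrix_equiv_self (auxEquiv ι) Mc, hsub, aux_det_fromBlocks]
    congr 1
    · congr 1
      ext k l
      simp [Complex.ext_iff]
    · congr 1
      ext k l
      simp [Complex.ext_iff]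
  have hconj : (A.map fun z => (starRingEnd ℂ) z).det = (starRingEnd ℂ) A.det :=
    ((starRingEnd ℂ).map_det A).symm
  have : (M.det : ℂ) = (Complex.normSq A.det : ℂ) := by
    rw [← hmap, hdetMc, hconj, Complex.normSq_eq_conj_mul_self]
  exact_mod_cast this

lemma aux_stdBasis_repr {m n : Type*} [Fintype m] [Fintype n] [DecidableEq m] [DecidableEq n]
    (M : Matrix m n ℂ) (p : m × n) :
    (Matrix.stdBasis ℂ m n).repr M p = M p.1 p.2 := by
  have hM : M = ∑ q : m × n, M q.1 q.2 • (Matrix.stdBasis ℂ m n) q := by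
    have h1 : ∀ (i : m) (j : n), M i j • (Matrix.stdBasis ℂ m n) (i, j)
        = Matrix.single i j (M i j) := fun i j => by
      rw [Matrix.stdBasis_eq_single, smul_single, smul_eq_mul, mul_one]
    rw [Fintype.sum_prod_type]
    simp_rw [h1]
    exact matrix_eq_sum_single M
  conv_lhs => rw [hM]
  rw [(Matrix.stdBasis ℂ m n).repr_sum_self]

theorem stmt_10 (n m : ℕ) (B : Matrix (Fin m) (Fin m) ℂ) (hB : IsUnit B.det)
    (T : Matrix (Fin n) (Fin m) ℂ →ₗ[ℝ] Matrix (Fin n) (Fin m) ℂ)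
    (hT : ∀ Z, T Z = Z * B) :
    |LinearMap.det T| = ‖B.det‖ ^ (2 * n) := by
  set c := Matrix.stdBasis ℂ (Fin n) (Fin m) with hc
  set fc : Matrix (Fin n) (Fin m) ℂ →ₗ[ℂ] Matrix (Fin n) (Fin m) ℂ :=
    { toFun := fun Z => Z * B,
      map_add' := fun Z W => Matrix.add_mul Z W B,
      map_smul' := fun a Z => Matrix.smul_mul a Z B } with hfc
  have hTf : T = fc.restrictScalars ℝ := by
    apply LinearMap.ext; intro Z
    simp [hT, hfc]
  -- the complex determinant of fc
  have hA : LinearMap.toMatrix c c fc = (blockDiagonal fun _ : Fin n => Bᵀ).submatrix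
      (Equiv.prodComm (Fin n) (Fin m)) (Equiv.prodComm (Fin n) (Fin m)) := by
    ext ⟨k, l⟩ ⟨k', l'⟩
    rw [LinearMap.toMatrix_apply, hfc]
    simp only [LinearMap.coe_mk, AddHom.coe_mk, hc, Matrix.stdBasis_eq_single]
    rw [aux_stdBasis_repr]
    simp [Matrix.single_mul_apply_same, mul_apply, Matrix.single,
      blockDiagonal_apply, Matrix.submatrix_apply, transpose_apply, ite_and, eq_comm]
  have hdetfc : LinearMap.det fc = B.det ^ n := by
    rw [← LinearMap.det_toMatrix c, hA, det_submatrix_equiv_self, det_blockDiagonal]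
    simp [det_transpose]
  have hdetT : LinearMap.det T = Complex.normSq (LinearMap.det fc) := by
    rw [hTf, ← LinearMap.det_toMatrix (Complex.basisOneI.smulTower c),
      aux_det_real_block (LinearMap.toMatrix c c fc) _
        (fun p q => aux_toMatrix_restrictScalars c fc p q),
      LinearMap.det_toMatrix]
  rw [hdetT, hdetfc, abs_of_nonneg (Complex.normSq_nonneg _), map_pow]
  rw [Complex.normSq_eq_norm_sq, ← pow_mul]
end

section
/- Pseudo-determinant relation under rank-preserving congruence: if Y = H₁ Λ H₁ᵀ with H₁ m×n having orthonormal columns and Λ diagonal positive, and B is invertible m×m, and X = Bᵀ Y B has spectral form X = G₁ Δ G₁ᵀ (G₁ m×n orthonormal columns, Δ diagonal positive), then ∏ᵢ δᵢ = det(H₁ᵀ B G₁) · det(G₁ᵀ Bᵀ H₁) · ∏ᵢ λᵢ. -/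
open Matrix

theorem stmt_18 (m n : ℕ)
    (H₁ G₁ : Matrix (Fin m) (Fin n) ℝ)
    (hH : H₁ᵀ * H₁ = 1) (hG : G₁ᵀ * G₁ = 1)
    (lam δ : Fin n → ℝ) (hlam : ∀ i, 0 < lam i) (hδ : ∀ i, 0 < δ i)
    (B : Matrix (Fin m) (Fin m) ℝ) (hB : IsUnit B.det)
    (hcong : G₁ * Matrix.diagonal δ * G₁ᵀ
      = Bᵀ * (H₁ * Matrix.diagonal lam * H₁ᵀ) * B) :
    (Matrix.diagonal δ).det
      = (H₁ᵀ * B * G₁).det * (G₁ᵀ * Bᵀ * H₁).det * (Matrix.diagonal lam).det := by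
  have key : Matrix.diagonal δ
      = (G₁ᵀ * Bᵀ * H₁) * Matrix.diagonal lam * (H₁ᵀ * B * G₁) := by
    have h := congrArg (fun M => G₁ᵀ * M * G₁) hcong
    simp only [Matrix.mul_assoc] at h ⊢
    rw [hG, Matrix.mul_one, ← Matrix.mul_assoc, hG, Matrix.one_mul] at h
    exact h
  rw [key, Matrix.det_mul, Matrix.det_mul]
  ring
end
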